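/- If δ − α b_m + α N b_m²/(r R_m) < 0 and Nδ − α b_m + α N b_m²/(r R_m) + α² N b_m²/(r R_m) > 0, then there exists a unique interior fixed point (x*, y*) with 0 < x* < 1 and 0 < y* < R_m of the tax-reward system. -/

import Mathlib

theorem stmt_10 (N : ℕ) (hN : 2 ≤ N) (r δ bm α Rm : ℝ)
    (hr : 0 < r) (hδ : 0 < δ) (hbm : 0 < bm) (hα : 0 < α) (hRm : 0 < Rm)
    (h1 : δ - α * bm + α * N * bm ^ 2 / (r * Rm) < 0)
    (h2 : N * δ - α * bm + α * N * bm ^ 2 / (r * Rm) + α ^ 2 * N * bm ^ 2 / (r * Rm) > 0) :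
    ∃! p : ℝ × ℝ, (0 < p.1 ∧ p.1 < 1 ∧ 0 < p.2 ∧ p.2 < Rm) ∧
      δ * (1 - (1 - p.1) ^ N) / p.1 = p.2 / Rm * bm * α ∧
      p.2 = Rm - N * bm / r * (1 + (1 - p.1) * α) := by
  have hr' : r ≠ 0 := hr.ne'
  have hRm' : Rm ≠ 0 := hRm.ne'
  obtain ⟨F, hF⟩ : ∃ F : ℝ → ℝ, ∀ x, F x = δ * (∑ k ∈ Finset.range N, (1 - x) ^ k)
      - (Rm - N * bm / r * (1 + (1 - x) * α)) / Rm * bm * α :=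
    ⟨fun x => δ * (∑ k ∈ Finset.range N, (1 - x) ^ k)
      - (Rm - N * bm / r * (1 + (1 - x) * α)) / Rm * bm * α, fun x => rfl⟩
  -- key identity
  have key : ∀ x : ℝ, x ≠ 0 → δ * (1 - (1 - x) ^ N) / x
      = δ * (∑ k ∈ Finset.range N, (1 - x) ^ k) := by
    intro x hx
    have h := geom_sum_mul (1 - x) N
    rw [div_eq_iff hx]
    linear_combination δ * h
  -- strict antitonicity
  have hanti : ∀ x1 x2 : ℝ, 0 ≤ x1 → x2 ≤ 1 → x1 < x2 → F x2 < F x1 := by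
    intro x1 x2 h0 h1' hlt
    have h0' : (0:ℝ) ≤ 1 - x2 := by linarith
    have hle : (1:ℝ) - x2 ≤ 1 - x1 := by linarith
    have hsum : (∑ k ∈ Finset.range N, (1 - x2) ^ k) < ∑ k ∈ Finset.range N, (1 - x1) ^ k := by
      apply Finset.sum_lt_sum (fun i _ => pow_le_pow_left₀ h0' hle i)
      refine ⟨1, Finset.mem_range.mpr (by omega), ?_⟩
      simpa using (by linarith : (1:ℝ) - x2 < 1 - x1)
    have hG : 0 ≤ (N:ℝ) * bm / r * α * (x2 - x1) / Rm * bm * α := by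
      have hx : (0:ℝ) ≤ x2 - x1 := by linarith
      have hN0 : (0:ℝ) ≤ (N:ℝ) := by positivity
      positivity
    have hEq : F x2 - F x1 = δ * (∑ k ∈ Finset.range N, (1 - x2) ^ k)
        - δ * (∑ k ∈ Finset.range N, (1 - x1) ^ k)
        - (N:ℝ) * bm / r * α * (x2 - x1) / Rm * bm * α := by
      rw [hF, hF]
      ring
    nlinarith [mul_lt_mul_of_pos_left hsum hδ]
  -- values at endpoints
  have hsum0 : (∑ k ∈ Finset.range N, ((1:ℝ) - 0) ^ k) = N := by simp
  have hsum1 : (∑ k ∈ Finset.range N, ((1:ℝ) - 1) ^ k) = 1 := by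
    rw [show (1:ℝ) - 1 = 0 by ring, geom_sum_eq (by norm_num : (0:ℝ) ≠ 1),
      zero_pow (by omega : N ≠ 0)]
    norm_num
  have hF0 : 0 < F 0 := by
    have e0 : F 0 = N * δ - α * bm + α * N * bm ^ 2 / (r * Rm)
        + α ^ 2 * N * bm ^ 2 / (r * Rm) := by
      rw [hF, hsum0]
      field_simp
      ring
    rw [e0]; linarith
  have hF1 : F 1 < 0 := by
    have e1 : F 1 = δ - α * bm + α * N * bm ^ 2 / (r * Rm) := by
      rw [hF, hsum1]
      field_simp
      ring
    rw [e1]; linarith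
  -- continuity
  have hcont : Continuous F := by
    have : F = fun x => δ * (∑ k ∈ Finset.range N, (1 - x) ^ k)
      - (Rm - N * bm / r * (1 + (1 - x) * α)) / Rm * bm * α := funext hF
    rw [this]
    apply Continuous.sub
    · exact continuous_const.mul (continuous_finset_sum _ fun i _ =>
        (continuous_const.sub continuous_id).pow i)
    · fun_prop
  -- IVT
  have hmem : (0:ℝ) ∈ Set.Ioo (F 1) (F 0) := ⟨hF1, hF0⟩
  obtain ⟨x, hx, hFx⟩ := intermediate_value_Ioo' (by norm_num : (0:ℝ) ≤ 1)
    hcont.continuousOn hmem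
  obtain ⟨hx0, hx1⟩ := hx
  have hxne : x ≠ 0 := ne_of_gt hx0
  set y : ℝ := Rm - N * bm / r * (1 + (1 - x) * α) with hy
  -- positivity of the sum
  have hSpos : 0 < ∑ k ∈ Finset.range N, (1 - x) ^ k := by
    have h1x : (0:ℝ) ≤ 1 - x := by linarith
    have : ((1:ℝ) - x) ^ 0 ≤ ∑ k ∈ Finset.range N, (1 - x) ^ k := by
      apply Finset.single_le_sum (fun i _ => pow_nonneg h1x i)
      exact Finset.mem_range.mpr (by omega)
    simpa using lt_of_lt_of_le one_pos this
  -- F x = 0 gives the fixed-point equation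
  have heq1 : δ * (1 - (1 - x) ^ N) / x = y / Rm * bm * α := by
    rw [key x hxne]
    have h0 : δ * (∑ k ∈ Finset.range N, (1 - x) ^ k)
        - (Rm - N * bm / r * (1 + (1 - x) * α)) / Rm * bm * α = 0 := by
      rw [← hF]; exact hFx
    rw [hy]
    linarith
  have hypos : 0 < y := by
    have h0 : y * (bm * α) = δ * (∑ k ∈ Finset.range N, (1 - x) ^ k) * Rm := by
      have : δ * (∑ k ∈ Finset.range N, (1 - x) ^ k)
          - y / Rm * bm * α = 0 := by
        have h0 := hFx
        rw [hF x] at h0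
        rw [hy]; linarith
      field_simp at this
      linarith
    have hpos : 0 < δ * (∑ k ∈ Finset.range N, (1 - x) ^ k) * Rm :=
      mul_pos (mul_pos hδ hSpos) hRm
    nlinarith [mul_pos hbm hα]
  have hylt : y < Rm := by
    have hNpos : (0:ℝ) < (N:ℝ) := by exact_mod_cast (by omega : 0 < N)
    have h1x : (0:ℝ) < 1 - x := by linarith
    have : 0 < (N:ℝ) * bm / r * (1 + (1 - x) * α) := by
      apply mul_pos (div_pos (mul_pos hNpos hbm) hr)
      nlinarith
    rw [hy]; linarith
  refine ⟨(x, y), ⟨⟨hx0, hx1, hypos, hylt⟩, heq1, rfl⟩, ?_⟩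
  rintro ⟨px, py⟩ ⟨⟨hp0, hp1, hpy0, hpyR⟩, hpe1, hpe2⟩
  simp only at hp0 hp1 hpy0 hpyR hpe1 hpe2 ⊢
  have hpxne : px ≠ 0 := ne_of_gt hp0
  have hFp : F px = 0 := by
    rw [hF]
    have := hpe1
    rw [key px hpxne, hpe2] at this
    linarith
  have hxx : px = x := by
    rcases lt_trichotomy px x with h | h | h
    · have := hanti px x hp0.le hx1.le h
      rw [hFx, hFp] at this
      exact absurd this (lt_irrefl 0)
    · exact h
    · have := hanti x px hx0.le hp1.le h
      rw [hFx, hFp] at this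
      exact absurd this (lt_irrefl 0)
  have hyy : py = y := by rw [hpe2, hxx, hy]
  exact Prod.ext hxx hyy
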